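/- In a finite left modular lattice with left modular maximal chain 0 = x_0 ⋖ ... ⋖ x_n = 1, the two edge labellings γ_1(y⋖z) = min{δ(v) : v join-irreducible, v ≤ z, v ≰ y} and γ_3(y⋖z) = min{i : y ∨ (x_i ∧ z) = z} coincide on all covering relations y ⋖ z. -/

import Mathlib

variable {α : Type*}

/-- An element is join-irreducible if it is not the minimum and is not a join
of two strictly smaller elements. -/
def JoinIrred [Lattice α] (a : α) : Prop :=
  ¬ IsBot a ∧ ∀ b c : α, b < a → c < a → b ⊔ c ≠ a

/-- An element is meet-irreducible if it is not the maximum and is not a meet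
of two strictly larger elements. -/
def MeetIrred [Lattice α] (a : α) : Prop :=
  ¬ IsTop a ∧ ∀ b c : α, a < b → a < c → b ⊓ c ≠ a

/-- An element `x` is left modular if `(y ⊔ x) ⊓ z = y ⊔ (x ⊓ z)` for all `y < z`. -/
def LeftModular [Lattice α] (x : α) : Prop :=
  ∀ y z : α, y < z → (y ⊔ x) ⊓ z = y ⊔ (x ⊓ z)

/-- A maximal chain `⊥ = x 0 ⋖ x 1 ⋖ ⋯ ⋖ x n = ⊤` all of whose elements are left modular. -/
def IsLMChain [Lattice α] {n : ℕ} (x : Fin (n + 1) → α) : Prop :=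
  IsBot (x 0) ∧ IsTop (x (Fin.last n)) ∧ (∀ i : Fin n, x i.castSucc ⋖ x i.succ) ∧
    ∀ i, LeftModular (x i)

/-- A finite lattice is trim if it has a left modular maximal chain of `n + 1` elements,
exactly `n` join-irreducibles and exactly `n` meet-irreducibles. -/
def Trim (α : Type*) [Lattice α] [Finite α] : Prop :=
  ∃ (n : ℕ) (x : Fin (n + 1) → α), IsLMChain x ∧
    Nat.card {v : α // JoinIrred v} = n ∧ Nat.card {v : α // MeetIrred v} = n

/-- In a left modular lattice, for any covering relation `y ⋖ z`, the labelling induced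
from join-irreducibles, `γ₁(y ⋖ z) = min {δ v | v` join-irreducible, `v ≤ z, v ≰ y}`,
coincides with the labelling induced from the left modular chain,
`γ₃(y ⋖ z) = min {i | y ⊔ (x i ⊓ z) = z}`. -/
theorem labellings_coincide [Lattice α] [Finite α] {n : ℕ}
    (x : Fin (n + 1) → α) (hx : IsLMChain x) {y z : α} (hyz : y ⋖ z)
    (j : Fin (n + 1)) :
    IsLeast {i : Fin (n + 1) | ∃ v : α, JoinIrred v ∧ v ≤ z ∧ ¬ v ≤ y ∧
        IsLeast {k : Fin (n + 1) | v ≤ x k} i} j ↔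
    IsLeast {i : Fin (n + 1) | y ⊔ (x i ⊓ z) = z} j := by
  obtain ⟨hbot, htop, hcov, hlm⟩ := hx
  set S₃ : Set (Fin (n + 1)) := {i | y ⊔ (x i ⊓ z) = z} with hS₃def
  -- the set S₃ is nonempty
  have hlastS : Fin.last n ∈ S₃ := by
    have h1 : x (Fin.last n) ⊓ z = z := inf_eq_right.mpr (htop z)
    simp only [hS₃def, Set.mem_setOf_eq, h1, sup_eq_right]
    exact hyz.le
  obtain ⟨m, hmS, hmmin⟩ :=
    Set.exists_min_image S₃ id (Set.toFinite S₃) ⟨_, hlastS⟩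
  have hm3 : IsLeast S₃ m := ⟨hmS, fun b hb => hmmin b hb⟩
  -- key: if x k ⊓ z ≰ y then k ∈ S₃
  have key : ∀ k : Fin (n + 1), ¬ x k ⊓ z ≤ y → k ∈ S₃ := by
    intro k hk
    have h1 : y < y ⊔ (x k ⊓ z) := left_lt_sup.mpr hk
    have h2 : y ⊔ (x k ⊓ z) ≤ z := sup_le hyz.le inf_le_right
    exact h2.lt_or_eq.resolve_left (hyz.2 h1)
  -- x m ⊓ z ≰ y
  have hmny : ¬ x m ⊓ z ≤ y := by
    intro h
    have : y = z := by
      have := hmS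
      simp only [hS₃def, Set.mem_setOf_eq, sup_eq_left.mpr h] at this
      exact this
    exact hyz.lt.ne this
  -- choose a minimal v ≤ x m ⊓ z with v ≰ y
  set T : Set α := {v | v ≤ x m ⊓ z ∧ ¬ v ≤ y} with hTdef
  obtain ⟨v, hvT, hvmin⟩ : ∃ v ∈ T, ∀ a' ∈ T, id a' ≤ id v → id v = id a' := by
    obtain ⟨v, hvT, hvmin⟩ :=
      Set.Finite.exists_minimalFor id T (Set.toFinite T) ⟨x m ⊓ z, le_refl _, hmny⟩
    exact ⟨v, hvT, fun a ha h => le_antisymm (hvmin ha h) h⟩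
  obtain ⟨hvle, hvny⟩ := hvT
  have hvz : v ≤ z := hvle.trans inf_le_right
  -- v is join-irreducible
  have hJI : JoinIrred v := by
    constructor
    · intro hb; exact hvny (hb y)
    · intro b c hb hc habs
      have hby : b ≤ y := by
        by_contra hby
        exact hb.ne (hvmin b ⟨(hb.le.trans hvle), hby⟩ hb.le).symm
      have hcy : c ≤ y := by
        by_contra hcy
        exact hc.ne (hvmin c ⟨(hc.le.trans hvle), hcy⟩ hc.le).symm
      exact hvny (habs ▸ sup_le hby hcy)
  -- δ(v) = m
  have hdelta : IsLeast {k : Fin (n + 1) | v ≤ x k} m := by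
    constructor
    · exact hvle.trans inf_le_left
    · intro k hk
      exact hm3.2 (key k fun h => hvny ((le_inf hk hvz).trans h))
  have hm1 : IsLeast {i : Fin (n + 1) | ∃ v : α, JoinIrred v ∧ v ≤ z ∧ ¬ v ≤ y ∧
      IsLeast {k : Fin (n + 1) | v ≤ x k} i} m := by
    constructor
    · exact ⟨v, hJI, hvz, hvny, hdelta⟩
    · rintro k ⟨w, _, hwz, hwy, hwk⟩
      exact hm3.2 (key k fun h => hwy ((le_inf hwk.1 hwz).trans h))
  constructor
  · intro h; exact (h.unique hm1) ▸ hm3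
  · intro h; exact (h.unique hm3) ▸ hm1
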